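/- Let X, U, Y be Hilbert spaces, A ∈ L(H₂, X), x ∈ X, T₂ ∈ L(H̃₂, H₂) a contraction, and set P := A (I − T₂ T₂*) A*. If there exists g ∈ H₂ with g ∈ Ran (I − T₂T₂*)^{1/2}, A g = x, and lifted norm ‖g‖_{H(T₂)} ≤ 1, then P ≽ x x* (i.e., P − x x* is positive semidefinite, where x x* denotes the rank-one operator y ↦ ⟨y, x⟩ x). -/

import Mathlib

open ContinuousLinearMap
open scoped ComplexInnerProductSpace

/-- Necessity in the solvability criterion: if there exists `g` in the generalized
de Branges–Rovnyak space `H(T₂) = Ran D` (with `D` the positive square root of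
`I - T₂ T₂*`) such that `A g = x` and the lifted norm of `g` is at most `1`
(i.e. `g = D g'` with `‖g'‖ ≤ 1`), then `P := A (I - T₂ T₂*) A*` dominates the
rank-one operator `x x*`. -/
theorem interpolation_necessity
    {H2 Ht X : Type*} [NormedAddCommGroup H2] [InnerProductSpace ℂ H2] [CompleteSpace H2]
    [NormedAddCommGroup Ht] [InnerProductSpace ℂ Ht] [CompleteSpace Ht]
    [NormedAddCommGroup X] [InnerProductSpace ℂ X] [CompleteSpace X]
    (A : H2 →L[ℂ] X) (x : X) (T2 : Ht →L[ℂ] H2) (hT2 : ‖T2‖ ≤ 1)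
    (D : H2 →L[ℂ] H2) (hDpos : D.IsPositive)
    (hDsq : D ∘L D = 1 - T2 ∘L adjoint T2)
    (hex : ∃ g' : H2, ‖g'‖ ≤ 1 ∧ A (D g') = x) :
    ((A ∘L ((1 - T2 ∘L adjoint T2) ∘L adjoint A))
      - (innerSL ℂ x).smulRight x).IsPositive := by
  obtain ⟨g', hg, hAg⟩ := hex
  have hD : IsSelfAdjoint D := hDpos.isSelfAdjoint
  have hrw : (A ∘L ((1 - T2 ∘L adjoint T2) ∘L adjoint A))
      = (A ∘L D) ∘L adjoint (A ∘L D) := by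
    rw [adjoint_comp, hD.adjoint_eq, ← hDsq]
    ext y; simp
  rw [hrw]
  constructor
  · -- self-adjointness
    rw [← isSelfAdjoint_iff_isSymmetric, IsSelfAdjoint, star_eq_adjoint, map_sub, adjoint_comp, adjoint_adjoint]
    congr 1
    ext u
    refine ext_inner_right ℂ fun v => ?_
    rw [adjoint_inner_left]
    simp only [smulRight_apply, innerSL_apply_apply, inner_smul_left, inner_smul_right,
      inner_conj_symm]
    ring
  · intro y
    have hsub : ((A ∘L D) ∘L adjoint (A ∘L D) - (innerSL ℂ x).smulRight x) y
        = (A ∘L D) (adjoint (A ∘L D) y) - (⟪x, y⟫ : ℂ) • x := by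
      simp
    have h1 : (⟪(A ∘L D) (adjoint (A ∘L D) y), y⟫ : ℂ)
        = (‖adjoint (A ∘L D) y‖ : ℂ)^2 := by
      rw [← adjoint_inner_right, inner_self_eq_norm_sq_to_K]; norm_cast
    have h2 : (⟪(⟪x, y⟫ : ℂ) • x, y⟫ : ℂ) = (starRingEnd ℂ) ⟪x, y⟫ * ⟪x, y⟫ := by
      rw [inner_smul_left]
    rw [reApplyInnerSelf_apply, hsub, inner_sub_left, h1, h2, map_sub]
    have hx : (⟪x, y⟫ : ℂ) = ⟪g', adjoint (A ∘L D) y⟫ := by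
      rw [adjoint_inner_right]
      simp [hAg]
    have hb : ‖(⟪x, y⟫ : ℂ)‖ ≤ ‖adjoint (A ∘L D) y‖ := by
      rw [hx]
      calc ‖(⟪g', adjoint (A ∘L D) y⟫ : ℂ)‖ ≤ ‖g'‖ * ‖adjoint (A ∘L D) y‖ :=
            norm_inner_le_norm _ _
        _ ≤ 1 * ‖adjoint (A ∘L D) y‖ := by
            exact mul_le_mul_of_nonneg_right hg (norm_nonneg _)
        _ = ‖adjoint (A ∘L D) y‖ := one_mul _
    have hsq : ‖(⟪x, y⟫ : ℂ)‖^2 ≤ ‖adjoint (A ∘L D) y‖^2 :=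
      pow_le_pow_left₀ (norm_nonneg _) hb 2
    have h3 : RCLike.re ((starRingEnd ℂ) (⟪x, y⟫ : ℂ) * ⟪x, y⟫) = ‖(⟪x, y⟫ : ℂ)‖^2 := by
      rw [RCLike.conj_mul]
      norm_cast
    have h4 : RCLike.re (((‖adjoint (A ∘L D) y‖ : ℂ))^2) = ‖adjoint (A ∘L D) y‖^2 := by
      norm_cast
    rw [h3, h4]
    linarith
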